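/- Fix constants c₁, c₂ > 0 and let f(x) = (1/√2) e^{−c₁ x}( x − (√2/2) c₂ x² ) for x ≥ 0. Then f attains a strict local maximum A_max > 0 at some x_max ∈ (0, √2/c₂), and f is strictly increasing on [0, x_max]. Moreover, for any 0 ≤ A < A_max, letting X_max ∈ [0, x_max) denote the unique root of f(x) = A in [0, x_max], the following trapping property holds: if I is an interval containing 0 and g : I → [0,∞) is continuous with g(0) ≤ x_max and f(g(t)) ≤ A for all t ∈ I, then g(t) ≤ X_max for all t ∈ I. -/

import Mathlib

/-!
Common framework: we model periodic functions on the torus 𝕋 = ℝ/2πℤ by their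
sequences of Fourier coefficients `u : ℤ → ℂ`.  Products of functions become
convolutions of coefficients, the analytic Sobolev norm is an exponentially
weighted ℓ²-sum, and the Hardy space L²₊ is modelled as `lp`-space over the
positive integer frequencies.
-/

noncomputable section
open Filter Set
open scoped BigOperators Topology

namespace BO

/-- Japanese bracket `⟨n⟩ = (1+n²)^{1/2}`. -/
def jb (n : ℤ) : ℝ := Real.sqrt (1 + (n : ℝ) ^ 2)

/-- The weight `⟨n⟩^s e^{ρ|n|}` of the analytic Sobolev space `H^{ρ,s}`. -/
def wt (ρ s : ℝ) (n : ℤ) : ℝ := jb n ^ s * Real.exp (ρ * |(n : ℝ)|)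

/-- Membership in `H^{ρ,s}` (for the Fourier coefficients `u`). -/
def MemH (ρ s : ℝ) (u : ℤ → ℂ) : Prop :=
  Summable fun n : ℤ => wt ρ s n ^ 2 * ‖u n‖ ^ 2

/-- The analytic Sobolev norm `‖u‖_{ρ,s}`. -/
def anorm (ρ s : ℝ) (u : ℤ → ℂ) : ℝ :=
  Real.sqrt (∑' n : ℤ, wt ρ s n ^ 2 * ‖u n‖ ^ 2)

/-- The (normalized) `L²` norm. -/
def l2norm (u : ℤ → ℂ) : ℝ := Real.sqrt (∑' n : ℤ, ‖u n‖ ^ 2)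

/-- `u` is the coefficient sequence of a real-valued function. -/
def IsReal (u : ℤ → ℂ) : Prop := ∀ n : ℤ, u (-n) = (starRingEnd ℂ) (u n)

/-- Fourier coefficients of the pointwise product (= convolution). -/
def fmul (u v : ℤ → ℂ) : ℤ → ℂ := fun n => ∑' m : ℤ, u (n - m) * v m

/-- Projection onto positive frequencies, `C₊`. -/
def Cplus (u : ℤ → ℂ) : ℤ → ℂ := fun n => if 0 < n then u n else 0

/-- Projection onto negative frequencies, `C₋`. -/
def Cminus (u : ℤ → ℂ) : ℤ → ℂ := fun n => if n < 0 then u n else 0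

/-- Projection onto the zero mode (spatial mean), `P₀`. -/
def P0 (u : ℤ → ℂ) : ℤ → ℂ := fun n => if n = 0 then u 0 else 0

/-- Membership in the positive-frequency space `H₊^{ρ,s}`. -/
def MemHplus (ρ s : ℝ) (u : ℤ → ℂ) : Prop :=
  MemH ρ s u ∧ ∀ n : ℤ, n ≤ 0 → u n = 0

/-- Coefficients of the constant function `1`. -/
def delta0 : ℤ → ℂ := fun n => if n = 0 then 1 else 0

/-- Spatial derivative `∂ₓ` (multiplier `i n`). -/
def dx (u : ℤ → ℂ) : ℤ → ℂ := fun n => Complex.I * (n : ℂ) * u n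

/-- Coefficients of the complex conjugate function. -/
def conjFun (u : ℤ → ℂ) : ℤ → ℂ := fun n => (starRingEnd ℂ) (u (-n))

/-- The Toeplitz operator `T_u f = C₊(uf)`. -/
def Toep (u f : ℤ → ℂ) : ℤ → ℂ := Cplus (fmul u f)

/-- The Lax operator `L_u f = -2i∂ₓ f + C₊(uf)` (multiplier `2n` plus Toeplitz). -/
def LaxOp (u f : ℤ → ℂ) : ℤ → ℂ := fun n => 2 * (n : ℂ) * f n + Toep u f n

/-- The free resolvent `R₀(κ) = (L₀+κ)⁻¹` on positive frequencies. -/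
def R0 (κ : ℝ) (u : ℤ → ℂ) : ℤ → ℂ :=
  fun n => if 0 < n then (2 * (n : ℂ) + (κ : ℂ))⁻¹ * u n else 0

/-- The algebra constant `C_s = 2^{s+1} (Σ_k ⟨k⟩^{-2s})^{1/2}` of `H^{ρ,s}`. -/
def Cs (s : ℝ) : ℝ := (2 : ℝ) ^ (s + 1) * Real.sqrt (∑' k : ℤ, jb k ^ (-(2 * s)))

/-- Positive integer frequencies. -/
abbrev PosZ := {n : ℤ // 0 < n}

/-- The Hardy space `L²₊(𝕋)` in Fourier coordinates. -/
abbrev Hardy := lp (fun _ : PosZ => ℂ) 2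

/-- The `H¹₊` subset of the Hardy space. -/
def H1set : Set Hardy := {f | Summable fun n : PosZ => (1 + ((n : ℤ) : ℝ) ^ 2) * ‖f n‖ ^ 2}

/-- `L²` norm of a positive-frequency coefficient sequence. -/
def l2p (f : PosZ → ℂ) : ℝ := Real.sqrt (∑' n : PosZ, ‖f n‖ ^ 2)

/-- Action of the Lax operator `L_v` on positive-frequency coefficients. -/
def laxC (v : ℤ → ℂ) (f : PosZ → ℂ) : PosZ → ℂ :=
  fun n => 2 * ((n : ℤ) : ℂ) * f n + ∑' m : PosZ, v ((n : ℤ) - (m : ℤ)) * f m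

/-- Exponentially shifted symbol: `(eshift σ v)(k) = e^{σ k} v(k)`. -/
def eshift (σ : ℝ) (v : ℤ → ℂ) : ℤ → ℂ := fun k => (Real.exp (σ * (k : ℝ)) : ℂ) * v k

/-- `ψ = e^{(ρ/2)L_v} v₊`, characterized by the backward flow
`φ(τ) = e^{(ρ/2-τ)L_v} v₊`: a strongly `C¹` curve in `H¹₊ ⊂ L²₊` with
`φ' = -L_v φ`, `φ(0) = ψ` and `φ(ρ/2) = v₊`. -/
def IsSpecState (ρ : ℝ) (v : ℤ → ℂ) (ψ : PosZ → ℂ) : Prop :=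
  ∃ φ : ℝ → PosZ → ℂ,
    φ 0 = ψ ∧
    (∀ n : PosZ, φ (ρ / 2) n = v (n : ℤ)) ∧
    (∀ τ ∈ Set.Icc (0 : ℝ) (ρ / 2),
      Summable fun n : PosZ => (1 + ((n : ℤ) : ℝ) ^ 2) * ‖φ τ n‖ ^ 2) ∧
    (∀ τ ∈ Set.Icc (0 : ℝ) (ρ / 2),
      Filter.Tendsto
        (fun τ' : ℝ =>
          l2p (fun n => φ τ' n - φ τ n + ((τ' - τ : ℝ) : ℂ) * laxC v (φ τ) n) / |τ' - τ|)
        (nhdsWithin τ (Set.Icc (0 : ℝ) (ρ / 2) \ {τ})) (nhds 0))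

/-- The exponential spectral energy `E_ρ(v) = ‖ψ_v‖² + ‖(1/2)L_v ψ_v‖²`
expressed through the state `ψ = e^{(ρ/2)L_v}v₊`. -/
def Erho (v : ℤ → ℂ) (ψ : PosZ → ℂ) : ℝ :=
  (∑' n : PosZ, ‖ψ n‖ ^ 2) + (1 / 4) * ∑' n : PosZ, ‖laxC v ψ n‖ ^ 2

/-- The geometric constant `c₁ = (1/2)(π²/6 - (π coth π - 1)/2)^{1/2}`. -/
def c1const : ℝ :=
  (1 / 2) * Real.sqrt (Real.pi ^ 2 / 6 -
    (Real.pi * (Real.cosh Real.pi / Real.sinh Real.pi) - 1) / 2)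

/-- The geometric constant `c₂ = (π coth π - 1)^{1/2}`. -/
def c2const : ℝ :=
  Real.sqrt (Real.pi * (Real.cosh Real.pi / Real.sinh Real.pi) - 1)

/-- The geometric bounding function `f(x) = (1/√2) e^{-c₁x}(x - (√2/2)c₂x²)`. -/
def fbar (c₁ c₂ x : ℝ) : ℝ :=
  (1 / Real.sqrt 2) * Real.exp (-c₁ * x) * (x - (Real.sqrt 2 / 2) * c₂ * x ^ 2)

/-- `m` is the resolvent gauge variable `m(κ,u) = (L_u+κ)⁻¹ u₊`:
the unique positive-frequency `ℓ²` solution of `(L_u+κ)m = u₊`. -/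
def IsGauge (κ : ℝ) (u m : ℤ → ℂ) : Prop :=
  (∀ n : ℤ, n ≤ 0 → m n = 0) ∧ (Summable fun n : ℤ => ‖m n‖ ^ 2) ∧
  ∀ n : ℤ, LaxOp u m n + (κ : ℂ) * m n = Cplus u n

-- The gauge variable, selected by choice (it is unique for `κ` large).
open scoped Classical in
def gauge (κ : ℝ) (u : ℤ → ℂ) : ℤ → ℂ :=
  if h : ∃ m : ℤ → ℂ, IsGauge κ u m then h.choose else 0

/-- The spectral generating functional `β(κ;u) = ⟨u₊, m(κ,u)⟩_{L²}`. -/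
def beta (κ : ℝ) (u : ℤ → ℂ) : ℂ :=
  ∑' n : ℤ, Cplus u n * (starRingEnd ℂ) (gauge κ u n)

/-- Right-hand side of the Benjamin–Ono equation,
`∂ₜ u = -H∂ₓₓu - u∂ₓu` (the multiplier of `H∂ₓₓ` is `i n |n|`). -/
def BOrhs (u : ℤ → ℂ) : ℤ → ℂ :=
  fun n => -(Complex.I * (n : ℂ) * ((|n| : ℤ) : ℂ) * u n) - fmul u (dx u) n

/-- `u` is a global solution of the regularized `H_κ` flow
`∂ₜu = -(κ/2)∂ₓu + (κ²/2)∂ₓ(m + m̄ - |m|²)` with data `u₀`,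
continuous in time with values in `H₀^{ρ,1}`. -/
def IsHkFlow (ρ κ : ℝ) (u₀ : ℤ → ℂ) (u : ℝ → ℤ → ℂ) : Prop :=
  u 0 = u₀ ∧
  (∀ t : ℝ, MemH ρ 1 (u t) ∧ u t 0 = 0 ∧ IsReal (u t)) ∧
  (∀ t₀ : ℝ, Filter.Tendsto (fun t => anorm ρ 1 (fun n => u t n - u t₀ n))
      (nhds t₀) (nhds 0)) ∧
  (∀ t : ℝ, ∃ m : ℤ → ℂ, IsGauge κ (u t) m ∧
    ∀ n : ℤ, HasDerivAt (fun t' => u t' n)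
      (-((κ : ℂ) / 2) * (Complex.I * (n : ℂ) * u t n) +
        ((κ : ℂ) ^ 2 / 2) * (Complex.I * (n : ℂ) *
          (m n + conjFun m n - fmul m (conjFun m) n))) t)

/-- `u` is a global classical solution of the Benjamin–Ono equation with data `u₀`:
for every `T > 0` and `ε ∈ (0,ρ/6)` it lies in
`C¹([-T,T]; H₀^{ρ-3ε,1}) ∩ C([-T,T]; H₀^{ρ-ε,1})` and satisfies
`∂ₜu = -H∂ₓₓu - u∂ₓu` (time derivative in `H₀^{ρ-3ε,1}`). -/
def IsBOSol (ρ : ℝ) (u₀ : ℤ → ℂ) (u : ℝ → ℤ → ℂ) : Prop :=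
  u 0 = u₀ ∧
  (∀ t : ℝ, u t 0 = 0 ∧ IsReal (u t)) ∧
  ∀ T > (0 : ℝ), ∀ ε ∈ Set.Ioo (0 : ℝ) (ρ / 6),
    (∀ t ∈ Set.Icc (-T) T, MemH (ρ - ε) 1 (u t)) ∧
    (∀ t₀ ∈ Set.Icc (-T) T,
      Filter.Tendsto (fun t => anorm (ρ - ε) 1 (fun n => u t n - u t₀ n))
        (nhdsWithin t₀ (Set.Icc (-T) T)) (nhds 0)) ∧
    (∀ t₀ ∈ Set.Icc (-T) T, MemH (ρ - 3 * ε) 1 (BOrhs (u t₀)) ∧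
      Filter.Tendsto (fun t =>
          anorm (ρ - 3 * ε) 1
            (fun n => u t n - u t₀ n - ((t - t₀ : ℝ) : ℂ) * BOrhs (u t₀) n) / |t - t₀|)
        (nhdsWithin t₀ (Set.Icc (-T) T \ {t₀})) (nhds 0)) ∧
    (∀ t₀ ∈ Set.Icc (-T) T,
      Filter.Tendsto (fun t => anorm (ρ - 3 * ε) 1 (fun n => BOrhs (u t) n - BOrhs (u t₀) n))
        (nhdsWithin t₀ (Set.Icc (-T) T)) (nhds 0))


/-- The geometric rigidification (barrier) lemma for
`f(x) = (1/√2)e^{-c₁x}(x - (√2/2)c₂x²)`: `f` attains a strict local maximum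
`A_max > 0` at some `x_max ∈ (0, √2/c₂)`, is strictly increasing on
`[0,x_max]`, and for `0 ≤ A < A_max` the unique root `X_max ∈ [0,x_max)` of
`f = A` in `[0,x_max]` traps any continuous nonnegative trajectory `g` with
`g(0) ≤ x_max` and `f∘g ≤ A`. -/
theorem barrier_lemma (c₁ c₂ : ℝ) (h₁ : 0 < c₁) (h₂ : 0 < c₂) :
    ∃ xmax : ℝ, 0 < xmax ∧ xmax < Real.sqrt 2 / c₂ ∧
      0 < fbar c₁ c₂ xmax ∧
      (∀ᶠ y in nhdsWithin xmax {xmax}ᶜ, fbar c₁ c₂ y < fbar c₁ c₂ xmax) ∧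
      StrictMonoOn (fbar c₁ c₂) (Set.Icc 0 xmax) ∧
      ∀ A : ℝ, 0 ≤ A → A < fbar c₁ c₂ xmax →
        ∃ Xmax : ℝ, Xmax ∈ Set.Ico 0 xmax ∧ fbar c₁ c₂ Xmax = A ∧
          (∀ y ∈ Set.Icc 0 xmax, fbar c₁ c₂ y = A → y = Xmax) ∧
          ∀ I : Set ℝ, I.OrdConnected → (0 : ℝ) ∈ I →
            ∀ g : ℝ → ℝ, ContinuousOn g I → (∀ t ∈ I, 0 ≤ g t) →
              g 0 ≤ xmax → (∀ t ∈ I, fbar c₁ c₂ (g t) ≤ A) →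
              ∀ t ∈ I, g t ≤ Xmax := by
  have hsqrt2 : (0:ℝ) < Real.sqrt 2 := by positivity
  set a : ℝ := Real.sqrt 2 / 2 * c₂ with ha_def
  have ha : 0 < a := by positivity
  set s : ℝ := Real.sqrt (c₁ ^ 2 + 4 * a ^ 2) with hs_def
  have hs2 : s ^ 2 = c₁ ^ 2 + 4 * a ^ 2 := Real.sq_sqrt (by positivity)
  have hs0 : 0 < s := Real.sqrt_pos.2 (by positivity)
  set r₁ : ℝ := (c₁ + 2 * a - s) / (2 * c₁ * a) with hr₁_def
  set r₂ : ℝ := (c₁ + 2 * a + s) / (2 * c₁ * a) with hr₂_def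
  have hca : (0:ℝ) < 2 * c₁ * a := by positivity
  have hnum : 0 < c₁ + 2 * a - s := by nlinarith [hs2, hs0]
  have hr₁pos : 0 < r₁ := div_pos hnum hca
  have hr₁₂ : r₁ < r₂ := by
    rw [hr₁_def, hr₂_def, div_lt_div_iff₀ hca hca]
    nlinarith
  -- the quadratic factorization
  have hfac : ∀ x : ℝ, c₁ * a * x ^ 2 - (c₁ + 2 * a) * x + 1
      = c₁ * a * (x - r₁) * (x - r₂) := by
    intro x
    rw [hr₁_def, hr₂_def]
    field_simp
    nlinarith [hs2]
  -- the inverse root bound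
  have hinv : Real.sqrt 2 / c₂ = 1 / a := by
    have h2' : Real.sqrt 2 * Real.sqrt 2 = 2 := Real.mul_self_sqrt (by norm_num)
    rw [ha_def, eq_div_iff (by positivity)]
    field_simp
    nlinarith
  have hr₁lt : r₁ < Real.sqrt 2 / c₂ := by
    rw [hinv, hr₁_def, div_lt_div_iff₀ hca ha]
    nlinarith [hs2, hs0]
  -- derivative of fbar
  have hder : ∀ x : ℝ, HasDerivAt (fbar c₁ c₂)
      ((1 / Real.sqrt 2) * Real.exp (-c₁ * x) *
        (c₁ * a * x ^ 2 - (c₁ + 2 * a) * x + 1)) x := by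
    intro x
    have h1 : HasDerivAt (fun y : ℝ => (1 / Real.sqrt 2) * Real.exp (-c₁ * y))
        ((1 / Real.sqrt 2) * (Real.exp (-c₁ * x) * (-c₁))) x := by
      simpa using (((hasDerivAt_id x).const_mul (-c₁)).exp).const_mul (1 / Real.sqrt 2)
    have h2 : HasDerivAt (fun y : ℝ => y - a * y ^ 2) (1 - a * (2 * x)) x := by
      exact ((hasDerivAt_id' (x := x)).sub ((hasDerivAt_pow 2 x).const_mul a)).congr_deriv (by simp)
    have hfun : (fbar c₁ c₂)
        = fun y : ℝ => 1 / Real.sqrt 2 * Real.exp (-c₁ * y) * (y - a * y ^ 2) := by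
      funext y
      simp only [fbar, ha_def]
    rw [hfun]
    exact (h1.mul h2).congr_deriv (by beta_reduce; ring)
  have hcont : Continuous (fbar c₁ c₂) := by
    rw [continuous_iff_continuousAt]
    exact fun x => (hder x).differentiableAt.continuousAt
  -- strict monotonicity on [0, r₁]
  have hmono : StrictMonoOn (fbar c₁ c₂) (Set.Icc 0 r₁) := by
    apply strictMonoOn_of_deriv_pos (convex_Icc 0 r₁) hcont.continuousOn
    intro x hx
    rw [interior_Icc] at hx
    rw [(hder x).deriv]
    have hq : 0 < c₁ * a * x ^ 2 - (c₁ + 2 * a) * x + 1 := by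
      rw [hfac]
      have h1 : x - r₁ < 0 := by linarith [hx.2]
      have h2 : x - r₂ < 0 := by linarith [hx.2, hr₁₂]
      nlinarith [mul_pos_of_neg_of_neg h1 h2, mul_pos h₁ ha]
    positivity
  -- strict antitonicity on [r₁, r₂]
  have hanti : StrictAntiOn (fbar c₁ c₂) (Set.Icc r₁ r₂) := by
    apply strictAntiOn_of_deriv_neg (convex_Icc r₁ r₂) hcont.continuousOn
    intro x hx
    rw [interior_Icc] at hx
    rw [(hder x).deriv]
    have hq : c₁ * a * x ^ 2 - (c₁ + 2 * a) * x + 1 < 0 := by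
      rw [hfac]
      have h1 : 0 < x - r₁ := by linarith [hx.1]
      have h2 : x - r₂ < 0 := by linarith [hx.2]
      nlinarith [mul_pos h₁ ha, mul_pos (mul_pos (mul_pos h₁ ha) h1) (neg_pos.2 h2)]
    have hpos : 0 < (1 / Real.sqrt 2) * Real.exp (-c₁ * x) := by positivity
    exact mul_neg_of_pos_of_neg hpos hq
  have hf0 : fbar c₁ c₂ 0 = 0 := by simp [fbar]
  have hfpos : 0 < fbar c₁ c₂ r₁ := by
    have := hmono (Set.left_mem_Icc.2 hr₁pos.le) (Set.right_mem_Icc.2 hr₁pos.le) hr₁pos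
    rwa [hf0] at this
  refine ⟨r₁, hr₁pos, hr₁lt, hfpos, ?_, hmono, ?_⟩
  · -- strict local maximum
    have hIoo : Set.Ioo (0:ℝ) r₂ ∈ nhds r₁ := Ioo_mem_nhds hr₁pos hr₁₂
    filter_upwards [mem_nhdsWithin_of_mem_nhds hIoo, self_mem_nhdsWithin] with y hy hy'
    rcases lt_or_gt_of_ne (Set.mem_compl_singleton_iff.1 hy') with h | h
    · exact hmono ⟨hy.1.le, h.le⟩ (Set.right_mem_Icc.2 hr₁pos.le) h
    · exact hanti (Set.left_mem_Icc.2 hr₁₂.le) ⟨h.le, hy.2.le⟩ h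
  · -- trapping property
    intro A hA0 hAlt
    have hIVT : A ∈ fbar c₁ c₂ '' Set.Ico 0 r₁ := by
      apply intermediate_value_Ico hr₁pos.le hcont.continuousOn
      rw [hf0]
      exact ⟨hA0, hAlt⟩
    obtain ⟨X, hX, hfX⟩ := hIVT
    refine ⟨X, hX, hfX, ?_, ?_⟩
    · intro y hy hfy
      exact hmono.injOn hy ⟨hX.1, hX.2.le⟩ (by rw [hfy, hfX])
    · intro I hI hI0 g hgc hgnn hg0 hgA t ht
      by_contra hlt
      push_neg at hlt
      rcases le_or_gt (g t) r₁ with h | h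
      · have := hmono ⟨hX.1, hX.2.le⟩ ⟨hgnn t ht, h⟩ hlt
        rw [hfX] at this
        exact absurd (hgA t ht) (not_le.2 this)
      · have hsub : Set.uIcc (0:ℝ) t ⊆ I := hI.uIcc_subset hI0 ht
        have hmem : r₁ ∈ Set.uIcc (g 0) (g t) :=
          Set.mem_uIcc.2 (Or.inl ⟨hg0, h.le⟩)
        obtain ⟨τ, hτ, hgτ⟩ := intermediate_value_uIcc (hgc.mono hsub) hmem
        have := hgA τ (hsub hτ)
        rw [hgτ] at this
        linarith

end BO
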